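/- Let G be a finitely generated group and μ a symmetric probability measure on G whose support is finite, generates G, and contains the identity. Let μ^{*n} denote the n-fold convolution power of μ. Then for every subgroup H of G and every a ∈ G, the sequence μ^{*n}(aH) converges as n → ∞ to 1/[G:H], where 1/[G:H] is interpreted as 0 when H has infinite index. -/

import Mathlib

open Finset Filter

namespace RWaux

variable {X : Type*} [DecidableEq X]

/-- inner product of two finitely supported real functions -/
noncomputable def ip (f h : X →₀ ℝ) : ℝ := ∑ x ∈ f.support ∪ h.support, f x * h x

theorem ip_eq_sum {f h : X →₀ ℝ} {s : Finset X} (hf : f.support ⊆ s) (hh : h.support ⊆ s) :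
    ip f h = ∑ x ∈ s, f x * h x :=
  Finset.sum_subset (Finset.union_subset hf hh) (fun x _ hx => by
    have h0 : f x = 0 := by
      by_contra h0
      exact hx (Finset.mem_union_left _ (Finsupp.mem_support_iff.mpr h0))
    simp [h0])

theorem ip_comm (f h : X →₀ ℝ) : ip f h = ip h f := by
  rw [ip, ip_eq_sum (s := f.support ∪ h.support) Finset.subset_union_right
    Finset.subset_union_left]
  exact Finset.sum_congr rfl fun x _ => mul_comm _ _

theorem ip_add_left (f₁ f₂ h : X →₀ ℝ) : ip (f₁ + f₂) h = ip f₁ h + ip f₂ h := by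
  classical
  set s := f₁.support ∪ f₂.support ∪ h.support with hs
  have h1 : f₁.support ⊆ s := (Finset.subset_union_left).trans Finset.subset_union_left
  have h2 : f₂.support ⊆ s := (Finset.subset_union_right).trans Finset.subset_union_left
  have hhs : h.support ⊆ s := Finset.subset_union_right
  have h12 : (f₁ + f₂).support ⊆ s :=
    (Finsupp.support_add).trans (Finset.union_subset h1 h2)
  rw [ip_eq_sum h12 hhs, ip_eq_sum h1 hhs, ip_eq_sum h2 hhs, ← Finset.sum_add_distrib]
  exact Finset.sum_congr rfl fun x _ => by simp [add_mul]

theorem ip_smul_left (c : ℝ) (f h : X →₀ ℝ) : ip (c • f) h = c * ip f h := by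
  classical
  have hcf : (c • f).support ⊆ f.support ∪ h.support :=
    (Finsupp.support_smul).trans Finset.subset_union_left
  rw [ip_eq_sum hcf Finset.subset_union_right, ip, Finset.mul_sum]
  exact Finset.sum_congr rfl fun x _ => by simp [mul_assoc]

theorem ip_zero_left (h : X →₀ ℝ) : ip 0 h = 0 := by
  have := ip_smul_left 0 0 h
  simpa using this

theorem ip_add_right (f h₁ h₂ : X →₀ ℝ) : ip f (h₁ + h₂) = ip f h₁ + ip f h₂ := by
  rw [ip_comm, ip_add_left, ip_comm h₁ f, ip_comm h₂ f]

theorem ip_smul_right (c : ℝ) (f h : X →₀ ℝ) : ip f (c • h) = c * ip f h := by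
  rw [ip_comm, ip_smul_left, ip_comm]

theorem ip_sub_left (f₁ f₂ h : X →₀ ℝ) : ip (f₁ - f₂) h = ip f₁ h - ip f₂ h := by
  have : f₁ - f₂ = f₁ + (-1 : ℝ) • f₂ := by
    ext x; simp [sub_eq_add_neg]
  rw [this, ip_add_left, ip_smul_left]; ring

theorem ip_sub_right (f h₁ h₂ : X →₀ ℝ) : ip f (h₁ - h₂) = ip f h₁ - ip f h₂ := by
  rw [ip_comm, ip_sub_left, ip_comm h₁ f, ip_comm h₂ f]

theorem ip_self_nonneg (f : X →₀ ℝ) : 0 ≤ ip f f := by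
  rw [ip]
  exact Finset.sum_nonneg fun x _ => mul_self_nonneg _

theorem sq_apply_le_ip_self (f : X →₀ ℝ) (y : X) : (f y) ^ 2 ≤ ip f f := by
  classical
  by_cases hy : f y = 0
  · rw [hy]; simpa using ip_self_nonneg f
  · have hmem : y ∈ f.support ∪ f.support := by
      simp [Finsupp.mem_support_iff, hy]
    rw [ip]
    calc (f y) ^ 2 = f y * f y := pow_two (f y)
    _ ≤ ∑ x ∈ f.support ∪ f.support, f x * f x :=
      Finset.single_le_sum (fun x _ => mul_self_nonneg (f x)) hmem

theorem ip_sq_le (f h : X →₀ ℝ) : (ip f h) ^ 2 ≤ ip f f * ip h h := by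
  classical
  set s := f.support ∪ h.support with hs
  rw [ip_eq_sum (s := s) Finset.subset_union_left Finset.subset_union_right,
    ip_eq_sum (s := s) Finset.subset_union_left Finset.subset_union_left,
    ip_eq_sum (s := s) Finset.subset_union_right Finset.subset_union_right]
  have := Finset.sum_mul_sq_le_sq_mul_sq s (fun x => f x) (fun x => h x)
  calc (∑ x ∈ s, f x * h x) ^ 2 ≤ (∑ x ∈ s, (f x) ^ 2) * ∑ x ∈ s, (h x) ^ 2 := this
  _ = (∑ x ∈ s, f x * f x) * ∑ x ∈ s, h x * h x := by
      congr 1 <;> exact Finset.sum_congr rfl fun x _ => (pow_two _)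

/-- `|⟨f,h⟩| ≤ a*b` when `⟨f,f⟩ ≤ a²`, `⟨h,h⟩ ≤ b²`. specialized: `ip f h ≤ c` when
`ip f f ≤ c`, `ip h h ≤ c`, `0 ≤ c`. -/
theorem ip_le_of_self_le {f h : X →₀ ℝ} {c : ℝ} (hc : 0 ≤ c)
    (hf : ip f f ≤ c) (hh : ip h h ≤ c) : ip f h ≤ c := by
  have h1 : (ip f h) ^ 2 ≤ c * c := le_trans (ip_sq_le f h)
    (mul_le_mul hf hh (ip_self_nonneg h) hc)
  nlinarith [h1]

theorem neg_le_ip_of_self_le {f h : X →₀ ℝ} {c : ℝ} (hc : 0 ≤ c)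
    (hf : ip f f ≤ c) (hh : ip h h ≤ c) : -c ≤ ip f h := by
  have h1 : (ip f h) ^ 2 ≤ c * c := le_trans (ip_sq_le f h)
    (mul_le_mul hf hh (ip_self_nonneg h) hc)
  nlinarith [h1]

theorem ip_equivMapDomain (e : X ≃ X) (f h : X →₀ ℝ) :
    ip (f.equivMapDomain e) (h.equivMapDomain e) = ip f h := by
  classical
  set s := f.support ∪ h.support with hs
  have hfs : (f.equivMapDomain e).support ⊆ s.map e.toEmbedding := by
    intro x hx
    have : f (e.symm x) ≠ 0 := by
      simpa [Finsupp.equivMapDomain_apply] using Finsupp.mem_support_iff.mp hx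
    refine Finset.mem_map.mpr ⟨e.symm x, ?_, by simp⟩
    exact Finset.mem_union_left _ (Finsupp.mem_support_iff.mpr this)
  have hhs : (h.equivMapDomain e).support ⊆ s.map e.toEmbedding := by
    intro x hx
    have : h (e.symm x) ≠ 0 := by
      simpa [Finsupp.equivMapDomain_apply] using Finsupp.mem_support_iff.mp hx
    refine Finset.mem_map.mpr ⟨e.symm x, ?_, by simp⟩
    exact Finset.mem_union_right _ (Finsupp.mem_support_iff.mpr this)
  rw [ip_eq_sum hfs hhs, Finset.sum_map,
    ip_eq_sum (s := s) Finset.subset_union_left Finset.subset_union_right]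
  exact Finset.sum_congr rfl fun x _ => by
    simp [Finsupp.equivMapDomain_apply]

theorem ip_add_self_le (f h : X →₀ ℝ) :
    ip (f + h) (f + h) ≤ 2 * ip f f + 2 * ip h h := by
  rw [ip_add_left, ip_add_right, ip_add_right]
  have h1 := ip_sq_le f h
  have h2 := ip_comm h f
  nlinarith [ip_self_nonneg f, ip_self_nonneg h, sq_nonneg (ip f f - ip h h),
    sq_nonneg (ip f f + ip h h - 2 * ip f h)]

section Action

variable {G : Type*} [Group G] [MulAction G X]

noncomputable def Ug (g : G) (f : X →₀ ℝ) : X →₀ ℝ := f.equivMapDomain (MulAction.toPerm g)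

theorem Ug_apply (g : G) (f : X →₀ ℝ) (x : X) : Ug g f x = f (g⁻¹ • x) := rfl

theorem Ug_one (f : X →₀ ℝ) : Ug (1 : G) f = f := by
  ext x; simp [Ug_apply]

theorem Ug_Ug_inv (g : G) (h : X →₀ ℝ) : Ug g (Ug g⁻¹ h) = h := by
  ext x; simp [Ug_apply, smul_smul]

theorem Ug_sub (g : G) (f h : X →₀ ℝ) : Ug g (f - h) = Ug g f - Ug g h := by
  ext x; simp [Ug_apply]

theorem ip_Ug (g : G) (f h : X →₀ ℝ) : ip (Ug g f) (Ug g h) = ip f h :=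
  ip_equivMapDomain _ _ _

theorem ip_Ug_self (g : G) (f : X →₀ ℝ) : ip (Ug g f) (Ug g f) = ip f f := ip_Ug g f f

theorem ip_Ug_adj (g : G) (f h : X →₀ ℝ) : ip (Ug g f) h = ip f (Ug g⁻¹ h) := by
  conv_lhs => rw [show h = Ug g (Ug g⁻¹ h) from (Ug_Ug_inv g h).symm]
  rw [ip_Ug]

theorem ip_sum_left {ι : Type*} (s : Finset ι) (F : ι → (X →₀ ℝ)) (h : X →₀ ℝ) :
    ip (∑ g ∈ s, F g) h = ∑ g ∈ s, ip (F g) h := by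
  classical
  induction s using Finset.induction_on with
  | empty => simp [ip_zero_left]
  | insert _ _ hx ih =>
      rw [Finset.sum_insert hx, ip_add_left, ih, Finset.sum_insert hx]

noncomputable def Qop (μ : G →₀ ℝ) (f : X →₀ ℝ) : X →₀ ℝ :=
  ∑ g ∈ μ.support, μ g • Ug g f

variable (μ : G →₀ ℝ)

theorem Qop_apply (f : X →₀ ℝ) (x : X) :
    Qop μ f x = ∑ g ∈ μ.support, μ g * f (g⁻¹ • x) := by
  rw [Qop, Finset.sum_apply']
  exact Finset.sum_congr rfl fun g _ => by simp [Ug_apply]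

theorem Qop_sub (f h : X →₀ ℝ) : Qop μ (f - h) = Qop μ f - Qop μ h := by
  rw [Qop, Qop, Qop, ← Finset.sum_sub_distrib]
  exact Finset.sum_congr rfl fun g _ => by rw [Ug_sub, smul_sub]

theorem ip_Qop_left (f h : X →₀ ℝ) :
    ip (Qop μ f) h = ∑ g ∈ μ.support, μ g * ip (Ug g f) h := by
  rw [Qop, ip_sum_left]
  exact Finset.sum_congr rfl fun g _ => ip_smul_left _ _ _

theorem ip_Qop_right (f h : X →₀ ℝ) :
    ip f (Qop μ h) = ∑ g ∈ μ.support, μ g * ip f (Ug g h) := by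
  rw [ip_comm, ip_Qop_left]
  exact Finset.sum_congr rfl fun g _ => by rw [ip_comm]

theorem ip_Qop_adj (hsym : ∀ g : G, μ g⁻¹ = μ g) (f h : X →₀ ℝ) :
    ip (Qop μ f) h = ip f (Qop μ h) := by
  rw [ip_Qop_left, ip_Qop_right]
  refine Finset.sum_equiv (Equiv.inv G) (fun g => ?_) (fun g hg => ?_)
  · simp only [Equiv.inv_apply, Finsupp.mem_support_iff, hsym]
  · simp only [Equiv.inv_apply]
    rw [hsym, ip_Ug_adj]

theorem ip_Qop_self_le (hpos : ∀ g : G, 0 ≤ μ g)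
    (h1 : ∑ g ∈ μ.support, μ g = 1) (f : X →₀ ℝ) :
    ip (Qop μ f) (Qop μ f) ≤ ip f f := by
  rw [ip_Qop_left]
  have hterm : ∀ g ∈ μ.support, μ g * ip (Ug g f) (Qop μ f) ≤ μ g * ip f f := by
    intro g hg
    refine mul_le_mul_of_nonneg_left ?_ (hpos g)
    rw [ip_comm, ip_Qop_left]
    calc ∑ h' ∈ μ.support, μ h' * ip (Ug h' f) (Ug g f)
        ≤ ∑ h' ∈ μ.support, μ h' * ip f f := by
          refine Finset.sum_le_sum fun h' _ => mul_le_mul_of_nonneg_left ?_ (hpos h')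
          exact ip_le_of_self_le (ip_self_nonneg f) (le_of_eq (ip_Ug_self _ _))
            (le_of_eq (ip_Ug_self _ _))
      _ = ip f f := by rw [← Finset.sum_mul, h1, one_mul]
  calc ∑ g ∈ μ.support, μ g * ip (Ug g f) (Qop μ f)
      ≤ ∑ g ∈ μ.support, μ g * ip f f := Finset.sum_le_sum hterm
    _ = ip f f := by rw [← Finset.sum_mul, h1, one_mul]

theorem ip_Qop_ge (hpos : ∀ g : G, 0 ≤ μ g)
    (h1 : ∑ g ∈ μ.support, μ g = 1) (hid : (1 : G) ∈ μ.support) (f : X →₀ ℝ) :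
    (2 * μ 1 - 1) * ip f f ≤ ip (Qop μ f) f := by
  classical
  rw [ip_Qop_left]
  have hsplit : ∑ g ∈ μ.support, μ g * ip (Ug g f) f
      = μ 1 * ip f f + ∑ g ∈ μ.support.erase 1, μ g * ip (Ug g f) f := by
    rw [← Finset.add_sum_erase _ _ hid, Ug_one]
  have hmass : μ 1 + ∑ g ∈ μ.support.erase 1, μ g = 1 := by
    rw [Finset.add_sum_erase _ _ hid]; exact h1
  have hge : ∀ g ∈ μ.support.erase 1, μ g * (-(ip f f)) ≤ μ g * ip (Ug g f) f := by
    intro g hg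
    exact mul_le_mul_of_nonneg_left
      (neg_le_ip_of_self_le (ip_self_nonneg f) (le_of_eq (ip_Ug_self _ _)) le_rfl)
      (hpos g)
  have hsum : ∑ g ∈ μ.support.erase 1, μ g * (-(ip f f))
      ≤ ∑ g ∈ μ.support.erase 1, μ g * ip (Ug g f) f := Finset.sum_le_sum hge
  have hval : ∑ g ∈ μ.support.erase 1, μ g * (-(ip f f)) = (1 - μ 1) * (-(ip f f)) := by
    rw [← Finset.sum_mul]; congr 1; linarith
  rw [hsplit]
  rw [hval] at hsum
  nlinarith [hsum]

end Action

end RWaux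

open RWaux


/-- Convolution powers of a finitely supported measure `μ` on a group `G`:
`convPow μ 1 = μ` and `convPow μ (n+1) (x) = Σ_g μ(g) · (convPow μ n)(g⁻¹x)`
(with `convPow μ 0` the Dirac mass at the identity). -/
noncomputable def convPow {G : Type*} [Group G] (μ : G →₀ ℝ) : ℕ → (G →₀ ℝ)
  | 0 => Finsupp.single 1 1
  | n + 1 => μ.sum fun g c => c • (convPow μ n).mapDomain (fun h => g * h)

/-- The mass a finitely supported measure `ν` gives to a set `A ⊆ G`. -/
noncomputable def measOf {G : Type*} (ν : G →₀ ℝ) (A : Set G) : ℝ :=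
  ν.sum fun g c => A.indicator (fun _ => c) g

/-- **Equidistribution on cosets.** Let `G` be a finitely generated group and `μ` a
symmetric probability measure with finite generating support containing the identity.
Then for every subgroup `H ≤ G` and every `a ∈ G`, `μ^{*n}(aH) → 1/[G:H]`
(with `1/∞ = 0`; in Mathlib infinite index is `index = 0` and `(0:ℝ)⁻¹ = 0`). -/
theorem random_walk_measures_cosets {G : Type*} [Group G] (hFG : Group.FG G)
    (μ : G →₀ ℝ) (hpos : ∀ g : G, 0 ≤ μ g) (hsym : ∀ g : G, μ g⁻¹ = μ g)
    (htotal : μ.sum (fun _ c => c) = 1)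
    (hgen : Subgroup.closure (μ.support : Set G) = ⊤)
    (hid : (1 : G) ∈ μ.support) (H : Subgroup G) (a : G) :
    Filter.Tendsto (fun n => measOf (convPow μ n) {g : G | a⁻¹ * g ∈ H})
      Filter.atTop (nhds ((H.index : ℝ)⁻¹)) := by
  classical
  set q : ℕ → ((G ⧸ H) →₀ ℝ) := fun n => (convPow μ n).mapDomain QuotientGroup.mk with hqdef
  have hS1 : ∑ g ∈ μ.support, μ g = 1 := htotal
  have hε : 0 < μ 1 := lt_of_le_of_ne (hpos 1) (Ne.symm (Finsupp.mem_support_iff.mp hid))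
  -- the recurrence
  have hrec : ∀ n, q (n + 1) = Qop μ (q n) := by
    intro n
    have key : ∀ g : G,
        Finsupp.mapDomain (QuotientGroup.mk (s := H))
          (Finsupp.mapDomain (fun h => g * h) (convPow μ n)) = Ug g (q n) := by
      intro g
      rw [Ug, Finsupp.equivMapDomain_eq_mapDomain, hqdef]
      rw [← Finsupp.mapDomain_comp, ← Finsupp.mapDomain_comp]
      congr 1
    show (convPow μ (n + 1)).mapDomain QuotientGroup.mk = Qop μ (q n)
    rw [convPow]
    rw [Finsupp.sum, Finsupp.mapDomain_finset_sum, Qop]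
    refine Finset.sum_congr rfl fun g _ => ?_
    show Finsupp.mapDomain _ (μ g • _) = μ g • Ug g (q n)
    rw [Finsupp.mapDomain_smul, key g]
  -- basic quantities
  set u : ℕ → ℝ := fun n => ip (q n) (q n) with hudef
  have hu_succ : ∀ n, u (n + 1) ≤ u n := by
    intro n
    show ip (q (n+1)) (q (n+1)) ≤ ip (q n) (q n)
    rw [hrec n]
    exact ip_Qop_self_le μ hpos hS1 (q n)
  have hu_anti : Antitone u := antitone_nat_of_succ_le hu_succ
  have hu_nonneg : ∀ n, 0 ≤ u n := fun n => ip_self_nonneg _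
  have hu_bdd : BddBelow (Set.range u) := ⟨0, by rintro x ⟨n, rfl⟩; exact hu_nonneg n⟩
  set L : ℝ := ⨅ n, u n with hLdef
  have huL : Filter.Tendsto u Filter.atTop (nhds L) := tendsto_atTop_ciInf hu_anti hu_bdd
  have hLle : ∀ n, L ≤ u n := fun n => ciInf_le hu_bdd n
  have hu0 : u 0 = 1 := by
    show ip (q 0) (q 0) = 1
    have hq0 : q 0 = Finsupp.single (QuotientGroup.mk 1 : G ⧸ H) 1 := by
      show (convPow μ 0).mapDomain QuotientGroup.mk = _
      rw [convPow, Finsupp.mapDomain_single]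
    rw [hq0, ip_eq_sum (s := {(QuotientGroup.mk 1 : G ⧸ H)})
      Finsupp.support_single_subset Finsupp.support_single_subset]
    simp
  -- key identity : ip (q n) (q (n + 2k)) = u (n + k)
  have hkey : ∀ k n, ip (q n) (q (n + 2 * k)) = u (n + k) := by
    intro k
    induction k with
    | zero => intro n; simp [hudef]
    | succ k ih =>
        intro n
        rw [show n + 2 * (k + 1) = (n + 2 * k + 1) + 1 by ring, hrec,
          ← ip_Qop_adj μ hsym, ← hrec n,
          show n + 2 * k + 1 = (n + 1) + 2 * k by ring, ih (n + 1),
          show n + 1 + k = n + (k + 1) by ring]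
  have hdiff_even : ∀ n k, ip (q (n + 2 * k) - q n) (q (n + 2 * k) - q n)
      = u (n + 2 * k) - 2 * u (n + k) + u n := by
    intro n k
    rw [ip_sub_left, ip_sub_right, ip_sub_right]
    have h1 : ip (q (n + 2 * k)) (q n) = u (n + k) := by rw [ip_comm]; exact hkey k n
    have h2 : ip (q n) (q (n + 2 * k)) = u (n + k) := hkey k n
    have h3 : ip (q (n + 2 * k)) (q (n + 2 * k)) = u (n + 2 * k) := rfl
    have h4 : ip (q n) (q n) = u n := rfl
    rw [h1, h2, h3, h4]; ring
  -- difference sequence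
  set d : ℕ → ((G ⧸ H) →₀ ℝ) := fun n => q (n + 1) - q n with hddef
  set w : ℕ → ℝ := fun n => ip (d n) (d n) with hwdef
  have hdrec : ∀ n, d (n + 1) = Qop μ (d n) := by
    intro n
    show q (n + 2) - q (n + 1) = Qop μ (q (n + 1) - q n)
    rw [Qop_sub, ← hrec, ← hrec]
  have hw_succ : ∀ n, w (n + 1) ≤ w n := by
    intro n
    show ip (d (n + 1)) (d (n + 1)) ≤ ip (d n) (d n)
    rw [hdrec n]
    exact ip_Qop_self_le μ hpos hS1 (d n)
  have hw_anti : Antitone w := antitone_nat_of_succ_le hw_succ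
  have hw_nonneg : ∀ n, 0 ≤ w n := fun n => ip_self_nonneg _
  have hw_bdd : BddBelow (Set.range w) := ⟨0, by rintro x ⟨n, rfl⟩; exact hw_nonneg n⟩
  set dl : ℝ := ⨅ n, w n with hdldef
  have hwdl : Filter.Tendsto w Filter.atTop (nhds dl) := tendsto_atTop_ciInf hw_anti hw_bdd
  have hdl0 : 0 ≤ dl := le_ciInf hw_nonneg
  -- shifted limits
  have hshift : ∀ k : ℕ, Filter.Tendsto (fun n => u (n + k)) Filter.atTop (nhds L) :=
    fun k => huL.comp (tendsto_add_atTop_nat k)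
  have hwshift : ∀ k : ℕ, Filter.Tendsto (fun n => w (n + k)) Filter.atTop (nhds dl) :=
    fun k => hwdl.comp (tendsto_add_atTop_nat k)
  -- ip (d (n+1)) (d n) and its limit
  have hq2 : ∀ n, ip (d (n + 1)) (d n)
      = (u (n + 2) - 2 * u (n + 1) + u n - w (n + 1) - w n) / 2 := by
    intro n
    have e1 : q (n + 2) - q n = d (n + 1) + d n := by
      show q (n + 2) - q n = (q (n + 2) - q (n + 1)) + (q (n + 1) - q n)
      abel
    have e2 := hdiff_even n 1
    rw [show n + 2 * 1 = n + 2 by ring] at e2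
    rw [e1, ip_add_left, ip_add_right, ip_add_right] at e2
    have hcomm : ip (d n) (d (n + 1)) = ip (d (n + 1)) (d n) := ip_comm _ _
    have h5 : ip (d (n+1)) (d (n+1)) = w (n+1) := rfl
    have h6 : ip (d n) (d n) = w n := rfl
    rw [hcomm, h5, h6] at e2
    linarith
  have hipd : Filter.Tendsto (fun n => ip (d (n + 1)) (d n)) Filter.atTop (nhds (-dl)) := by
    rw [show (fun n => ip (d (n + 1)) (d n))
      = fun n => (u (n + 2) - 2 * u (n + 1) + u n - w (n + 1) - w n) / 2 from funext hq2]
    have hnum : Filter.Tendsto (fun n => u (n + 2) - 2 * u (n + 1) + u n - w (n + 1) - w n)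
        Filter.atTop (nhds (L - 2 * L + L - dl - dl)) :=
      (((((hshift 2).sub ((hshift 1).const_mul 2)).add (hshift 0)).sub (hwshift 1)).sub
        (hwshift 0))
    have := hnum.div_const 2
    rw [show (L - 2 * L + L - dl - dl) / 2 = -dl by ring] at this
    convert this using 2
  -- laziness kills dl
  have hlow : ∀ n, (2 * μ 1 - 1) * w n ≤ ip (d (n + 1)) (d n) := by
    intro n
    rw [hdrec n]
    exact ip_Qop_ge μ hpos hS1 hid (d n)
  have hdldl : (2 * μ 1 - 1) * dl ≤ -dl :=
    le_of_tendsto_of_tendsto' (hwdl.const_mul _) hipd hlow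
  have hdlzero : dl = 0 := by nlinarith
  have hw0 : Filter.Tendsto w Filter.atTop (nhds 0) := hdlzero ▸ hwdl
  -- uniform bound on differences
  have hbound : ∀ n m, n ≤ m →
      ip (q m - q n) (q m - q n) ≤ 2 * (u n - L) + 2 * w n := by
    intro n m hnm
    obtain ⟨k, rfl⟩ := Nat.exists_eq_add_of_le hnm
    rcases Nat.even_or_odd k with ⟨j, rfl⟩ | ⟨j, rfl⟩
    · have e := hdiff_even n j
      rw [show n + 2 * j = n + (j + j) by ring] at e
      have h1 : u (n + (j + j)) ≤ u (n + j) := hu_anti (by omega)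
      have h2 : L ≤ u (n + j) := hLle _
      have h3 : 0 ≤ w n := hw_nonneg n
      have h4 : L ≤ u n := hLle n
      rw [e]
      linarith
    · have e1 : q (n + (2 * j + 1)) - q n = (q ((n + 1) + 2 * j) - q (n + 1)) + d n := by
        show _ = _ + (q (n + 1) - q n)
        rw [show (n + 1) + 2 * j = n + (2 * j + 1) by ring]
        abel
      rw [e1]
      have h5 := ip_add_self_le (q ((n + 1) + 2 * j) - q (n + 1)) (d n)
      have e2 := hdiff_even (n + 1) j
      have h1 : u ((n + 1) + 2 * j) ≤ u ((n + 1) + j) := hu_anti (by omega)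
      have h2 : L ≤ u ((n + 1) + j) := hLle _
      have h4 : u (n + 1) ≤ u n := hu_succ n
      have h6 : ip (d n) (d n) = w n := rfl
      linarith
  have hBtend : Filter.Tendsto (fun n => 2 * (u n - L) + 2 * w n) Filter.atTop (nhds 0) := by
    have h1 : Filter.Tendsto (fun n => u n - L) Filter.atTop (nhds (L - L)) :=
      huL.sub tendsto_const_nhds
    rw [sub_self] at h1
    have h2 := (h1.const_mul 2).add (hw0.const_mul 2)
    simpa using h2
  -- pointwise limits exist
  have hαex : ∀ y : G ⧸ H, ∃ l : ℝ, Filter.Tendsto (fun n => q n y) Filter.atTop (nhds l) := by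
    intro y
    apply cauchySeq_tendsto_of_complete
    refine cauchySeq_of_le_tendsto_0 (fun n => Real.sqrt (2 * (u n - L) + 2 * w n)) ?_ ?_
    · intro n m N hn hm
      have key : ∀ n' m', N ≤ n' → n' ≤ m' →
          dist (q m' y) (q n' y) ≤ Real.sqrt (2 * (u N - L) + 2 * w N) := by
        intro n' m' hNn hnm
        rw [Real.dist_eq]
        have h0 : (q m' y - q n' y) ^ 2 ≤ 2 * (u n' - L) + 2 * w n' := by
          have h1 := sq_apply_le_ip_self (q m' - q n') y
          rw [Finsupp.sub_apply] at h1
          exact h1.trans (hbound n' m' hnm)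
        have h2 : 2 * (u n' - L) + 2 * w n' ≤ 2 * (u N - L) + 2 * w N := by
          have ha := hu_anti hNn
          have hb := hw_anti hNn
          linarith
        calc |q m' y - q n' y| = Real.sqrt ((q m' y - q n' y) ^ 2) :=
              (Real.sqrt_sq_eq_abs _).symm
          _ ≤ Real.sqrt (2 * (u N - L) + 2 * w N) := Real.sqrt_le_sqrt (by linarith)
      rcases le_total n m with h | h
      · rw [dist_comm]; exact key n m hn h
      · exact key m n hm h
    · have h3 := hBtend.sqrt
      rwa [Real.sqrt_zero] at h3
  choose α hα using hαex
  -- v_n tends to L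
  have hveq : ∀ n, ip (q n) (q (n + 1)) = (u (n + 1) + u n - w n) / 2 := by
    intro n
    have e : w n = u (n + 1) - 2 * ip (q n) (q (n + 1)) + u n := by
      show ip (q (n + 1) - q n) (q (n + 1) - q n) = _
      rw [ip_sub_left, ip_sub_right, ip_sub_right]
      have h1 : ip (q (n + 1)) (q n) = ip (q n) (q (n + 1)) := ip_comm _ _
      have h2 : ip (q (n + 1)) (q (n + 1)) = u (n + 1) := rfl
      have h3 : ip (q n) (q n) = u n := rfl
      rw [h1, h2, h3]; ring
    linarith
  have hv : Filter.Tendsto (fun n => ip (q n) (q (n + 1))) Filter.atTop (nhds L) := by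
    rw [funext hveq]
    have hnum := ((hshift 1).add (hshift 0)).sub hw0
    have h2 := hnum.div_const 2
    rw [show (L + L - 0) / 2 = L by ring] at h2
    convert h2 using 2
    simp only [add_zero]
  -- each unitary piece converges
  have ht : ∀ g ∈ μ.support,
      Filter.Tendsto (fun n => ip (Ug g (q n)) (q n)) Filter.atTop (nhds L) := by
    intro g hg
    have hgpos : 0 < μ g := lt_of_le_of_ne (hpos g) (Ne.symm (Finsupp.mem_support_iff.mp hg))
    have hup : ∀ (h' : G) n, ip (Ug h' (q n)) (q n) ≤ u n := fun h' n =>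
      ip_le_of_self_le (hu_nonneg n) (le_of_eq (ip_Ug_self _ _)) le_rfl
    have hsumv : ∀ n, ∑ h' ∈ μ.support, μ h' * ip (Ug h' (q n)) (q n)
        = ip (q n) (q (n + 1)) := by
      intro n
      rw [hrec n, ip_comm (q n) (Qop μ (q n)), ip_Qop_left]
    have hlow2 : ∀ n, μ g * (u n - ip (Ug g (q n)) (q n)) ≤ u n - ip (q n) (q (n + 1)) := by
      intro n
      have hexp : ∑ h' ∈ μ.support, μ h' * (u n - ip (Ug h' (q n)) (q n))
          = u n - ip (q n) (q (n + 1)) := by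
        calc ∑ h' ∈ μ.support, μ h' * (u n - ip (Ug h' (q n)) (q n))
            = ∑ h' ∈ μ.support, (μ h' * u n - μ h' * ip (Ug h' (q n)) (q n)) :=
              Finset.sum_congr rfl fun h' _ => mul_sub _ _ _
          _ = (∑ h' ∈ μ.support, μ h' * u n)
              - ∑ h' ∈ μ.support, μ h' * ip (Ug h' (q n)) (q n) := Finset.sum_sub_distrib _ _
          _ = u n - ip (q n) (q (n + 1)) := by rw [← Finset.sum_mul, hS1, one_mul, hsumv n]
      rw [← hexp]
      refine Finset.single_le_sum (f := fun h' => μ h' * (u n - ip (Ug h' (q n)) (q n))) (fun h' _ => ?_) hg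
      exact mul_nonneg (hpos h') (by linarith [hup h' n])
    have hdiffto : Filter.Tendsto (fun n => u n - ip (Ug g (q n)) (q n))
        Filter.atTop (nhds 0) := by
      have hub : ∀ n, u n - ip (Ug g (q n)) (q n) ≤ (u n - ip (q n) (q (n + 1))) / μ g := by
        intro n
        rw [le_div_iff₀ hgpos]
        have := hlow2 n
        linarith [hlow2 n, mul_comm (μ g) (u n - ip (Ug g (q n)) (q n))]
      have hlb : ∀ n, 0 ≤ u n - ip (Ug g (q n)) (q n) := fun n => by linarith [hup g n]
      have hupper : Filter.Tendsto (fun n => (u n - ip (q n) (q (n + 1))) / μ g)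
          Filter.atTop (nhds 0) := by
        have h6 := (huL.sub hv).div_const (μ g)
        rwa [sub_self, zero_div] at h6
      exact tendsto_of_tendsto_of_tendsto_of_le_of_le tendsto_const_nhds hupper hlb hub
    have h7 := huL.sub hdiffto
    rw [sub_zero] at h7
    exact h7.congr (fun n => by ring)
  -- invariance of α under the support of μ
  have hinv : ∀ g ∈ μ.support, ∀ y : G ⧸ H, α (g⁻¹ • y) = α y := by
    intro g hg y
    have hsqb : ∀ n, (q n (g⁻¹ • y) - q n y) ^ 2
        ≤ 2 * u n - 2 * ip (Ug g (q n)) (q n) := by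
      intro n
      have h1 := sq_apply_le_ip_self (Ug g (q n) - q n) y
      have h2 : (Ug g (q n) - q n) y = q n (g⁻¹ • y) - q n y := by
        rw [Finsupp.sub_apply, Ug_apply]
      rw [h2] at h1
      have h3 : ip (Ug g (q n) - q n) (Ug g (q n) - q n)
          = 2 * u n - 2 * ip (Ug g (q n)) (q n) := by
        rw [ip_sub_left, ip_sub_right, ip_sub_right]
        have c1 : ip (Ug g (q n)) (Ug g (q n)) = u n := ip_Ug_self _ _
        have c2 : ip (q n) (Ug g (q n)) = ip (Ug g (q n)) (q n) := ip_comm _ _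
        have c3 : ip (q n) (q n) = u n := rfl
        rw [c1, c2, c3]; ring
      rw [h3] at h1; exact h1
    have hub : Filter.Tendsto (fun n => 2 * u n - 2 * ip (Ug g (q n)) (q n))
        Filter.atTop (nhds 0) := by
      have h4 := (huL.const_mul 2).sub ((ht g hg).const_mul 2)
      rwa [sub_self] at h4
    have hsq0 : Filter.Tendsto (fun n => (q n (g⁻¹ • y) - q n y) ^ 2)
        Filter.atTop (nhds 0) :=
      tendsto_of_tendsto_of_tendsto_of_le_of_le tendsto_const_nhds hub
        (fun n => sq_nonneg _) hsqb
    have hlim1 : Filter.Tendsto (fun n => q n (g⁻¹ • y) - q n y) Filter.atTop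
        (nhds (α (g⁻¹ • y) - α y)) := (hα _).sub (hα y)
    have h5 : (α (g⁻¹ • y) - α y) ^ 2 = 0 := tendsto_nhds_unique (hlim1.pow 2) hsq0
    have h6 := pow_eq_zero_iff (n := 2) (by norm_num) |>.mp h5
    exact sub_eq_zero.mp h6
  -- invariance under all of G
  have hinvall : ∀ g : G, ∀ y : G ⧸ H, α (g • y) = α y := by
    intro g
    have hg : g ∈ Subgroup.closure (μ.support : Set G) := by rw [hgen]; trivial
    refine Subgroup.closure_induction ?_ ?_ ?_ ?_ hg
    · intro x hx y
      have h1 := hinv x hx (x • y)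
      rw [inv_smul_smul] at h1
      exact h1.symm
    · intro y; rw [one_smul]
    · intro x z hx hz px pz y
      rw [mul_smul, px, pz]
    · intro x hx px y
      have h1 := px (x⁻¹ • y)
      rw [smul_inv_smul] at h1
      exact h1.symm
  have hconst : ∀ y : G ⧸ H, α y = α (QuotientGroup.mk 1) := by
    intro y
    obtain ⟨b, rfl⟩ := QuotientGroup.mk_surjective y
    have h1 : (b : G) • (QuotientGroup.mk 1 : G ⧸ H) = QuotientGroup.mk b := by
      rw [MulAction.Quotient.smul_mk, smul_eq_mul, mul_one]
    rw [← h1, hinvall b]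
  -- identification of the coset mass
  have hmeas : ∀ n, measOf (convPow μ n) {g : G | a⁻¹ * g ∈ H} = q n (QuotientGroup.mk a) := by
    intro n
    show _ = (convPow μ n).mapDomain QuotientGroup.mk (QuotientGroup.mk a)
    rw [Finsupp.mapDomain, Finsupp.sum_apply, measOf]
    refine Finsupp.sum_congr fun g hg => ?_
    rw [Finsupp.single_apply, Set.indicator_apply]
    have hiff : (g ∈ {g : G | a⁻¹ * g ∈ H}) ↔ ((QuotientGroup.mk g : G ⧸ H) = QuotientGroup.mk a) := by
      rw [QuotientGroup.eq]
      simp only [Set.mem_setOf_eq]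
      constructor
      · intro h
        have h2 := H.inv_mem h
        rwa [mul_inv_rev, inv_inv] at h2
      · intro h
        have h2 := H.inv_mem h
        rwa [mul_inv_rev, inv_inv] at h2
    rw [if_congr hiff rfl rfl]
  -- the limit
  have hlim : Filter.Tendsto (fun n => q n (QuotientGroup.mk a)) Filter.atTop
      (nhds (α (QuotientGroup.mk 1))) := by
    have h1 := hα (QuotientGroup.mk a)
    rwa [hconst (QuotientGroup.mk a)] at h1
  have hcval : α (QuotientGroup.mk 1 : G ⧸ H) = (H.index : ℝ)⁻¹ := by
    by_cases hidx : H.index = 0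
    · have hcard0 : Nat.card (G ⧸ H) = 0 := by rw [← Subgroup.index_eq_card]; exact hidx
      have hinf : Infinite (G ⧸ H) := by
        rcases Nat.card_eq_zero.mp hcard0 with h | h
        · exact (h.false (QuotientGroup.mk 1)).elim
        · exact h
      have hbnd : ∀ s : Finset (G ⧸ H),
          (s.card : ℝ) * (α (QuotientGroup.mk 1)) ^ 2 ≤ 1 := by
        intro s
        have hn : ∀ n, ∑ y ∈ s, (q n y) ^ 2 ≤ 1 := by
          intro n
          have h1 : ∑ y ∈ s, (q n y) ^ 2 ≤ ∑ y ∈ s ∪ (q n).support, (q n y) * (q n y) := by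
            calc ∑ y ∈ s, (q n y) ^ 2 = ∑ y ∈ s, (q n y) * (q n y) :=
                Finset.sum_congr rfl fun y _ => pow_two _
              _ ≤ _ := Finset.sum_le_sum_of_subset_of_nonneg Finset.subset_union_left
                  (fun y _ _ => mul_self_nonneg _)
          have h2 : ∑ y ∈ s ∪ (q n).support, (q n y) * (q n y) = u n :=
            (ip_eq_sum Finset.subset_union_right Finset.subset_union_right).symm
          have h3 : u n ≤ u 0 := hu_anti (Nat.zero_le n)
          rw [h2] at h1
          rw [hu0] at h3
          linarith
        have hlim2 : Filter.Tendsto (fun n => ∑ y ∈ s, (q n y) ^ 2) Filter.atTop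
            (nhds (∑ y ∈ s, (α y) ^ 2)) := tendsto_finset_sum _ (fun y _ => (hα y).pow 2)
        have h4 : ∑ y ∈ s, (α y) ^ 2 ≤ 1 :=
          le_of_tendsto hlim2 (Filter.Eventually.of_forall hn)
        have h5 : ∑ y ∈ s, (α y) ^ 2 = (s.card : ℝ) * (α (QuotientGroup.mk 1)) ^ 2 := by
          rw [Finset.sum_congr rfl (fun y _ => by rw [hconst y]), Finset.sum_const,
            nsmul_eq_mul]
        rw [← h5]
        exact h4
      have hc0 : α (QuotientGroup.mk 1 : G ⧸ H) = 0 := by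
        by_contra hc
        have hc2 : 0 < (α (QuotientGroup.mk 1 : G ⧸ H)) ^ 2 := by positivity
        obtain ⟨N, hN⟩ := exists_nat_gt (1 / (α (QuotientGroup.mk 1 : G ⧸ H)) ^ 2)
        obtain ⟨s, hs⟩ := Infinite.exists_subset_card_eq (G ⧸ H) N
        have hb := hbnd s
        rw [hs] at hb
        rw [div_lt_iff₀ hc2] at hN
        linarith
      rw [hc0, hidx]
      simp
    · have hfin : Finite (G ⧸ H) := Nat.finite_of_card_ne_zero
        (by rwa [← Subgroup.index_eq_card])
      letI := Fintype.ofFinite (G ⧸ H)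
      have hmass : ∀ n, ∑ y : G ⧸ H, q n y = 1 := by
        intro n
        induction n with
        | zero =>
            have hq0 : q 0 = Finsupp.single (QuotientGroup.mk 1 : G ⧸ H) 1 := by
              show (convPow μ 0).mapDomain QuotientGroup.mk = _
              rw [convPow, Finsupp.mapDomain_single]
            rw [hq0]
            simp [Finsupp.single_apply]
        | succ n ih =>
            rw [hrec n]
            calc ∑ y : G ⧸ H, Qop μ (q n) y
                = ∑ y : G ⧸ H, ∑ g ∈ μ.support, μ g * q n (g⁻¹ • y) :=
                  Finset.sum_congr rfl fun y _ => Qop_apply μ (q n) y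
              _ = ∑ g ∈ μ.support, ∑ y : G ⧸ H, μ g * q n (g⁻¹ • y) := Finset.sum_comm
              _ = ∑ g ∈ μ.support, μ g * ∑ y : G ⧸ H, q n (g⁻¹ • y) :=
                  Finset.sum_congr rfl fun g _ => (Finset.mul_sum _ _ _).symm
              _ = ∑ g ∈ μ.support, μ g * 1 := by
                  refine Finset.sum_congr rfl fun g _ => ?_
                  congr 1
                  rw [← ih]
                  exact Equiv.sum_comp (MulAction.toPerm (g⁻¹ : G)) (fun y => q n y)
              _ = 1 := by
                  simp only [mul_one]
                  exact hS1
      have hαsum : ∑ y : G ⧸ H, α y = 1 := by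
        have h1 : Filter.Tendsto (fun n => ∑ y : G ⧸ H, q n y) Filter.atTop
            (nhds (∑ y : G ⧸ H, α y)) := tendsto_finset_sum _ (fun y _ => hα y)
        rw [show (fun n => ∑ y : G ⧸ H, q n y) = fun _ => (1 : ℝ) from funext hmass] at h1
        exact tendsto_nhds_unique h1 tendsto_const_nhds
      have hcards : ∑ y : G ⧸ H, α y
          = (Fintype.card (G ⧸ H) : ℝ) * α (QuotientGroup.mk 1) := by
        rw [Finset.sum_congr rfl (fun y _ => hconst y), Finset.sum_const, nsmul_eq_mul]
        simp [Finset.card_univ]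
      have hmul : (Fintype.card (G ⧸ H) : ℝ) * α (QuotientGroup.mk 1) = 1 := by
        rw [← hcards]
        exact hαsum
      have hidxcard : (H.index : ℝ) = (Fintype.card (G ⧸ H) : ℝ) := by
        rw [Subgroup.index_eq_card, Nat.card_eq_fintype_card]
      rw [hidxcard]
      exact eq_inv_of_mul_eq_one_left (by linarith [hmul, mul_comm (Fintype.card (G ⧸ H) : ℝ) (α (QuotientGroup.mk 1 : G ⧸ H))])
  rw [show (fun n => measOf (convPow μ n) {g : G | a⁻¹ * g ∈ H})
    = fun n => q n (QuotientGroup.mk a) from funext hmeas, ← hcval]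
  exact hlim
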